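/- In the formal power series ring in t over 𝒰_q^+, the following four identities hold: 𝒢̃(t)·𝒲₀ = (q⁻²·𝒲₀ + q⁻¹(q−q⁻¹)·E⁻(qξt))·𝒢̃(t); 𝒢̃(t)·𝒲₁ = (q²·𝒲₁ − q(q−q⁻¹)·E⁺(q⁻¹ξt))·𝒢̃(t); 𝒲₀·𝒢̃(t) = 𝒢̃(t)·(q²·𝒲₀ − q(q−q⁻¹)·E⁻(q⁻¹ξt)); 𝒲₁·𝒢̃(t) = 𝒢̃(t)·(q⁻²·𝒲₁ + q⁻¹(q−q⁻¹)·E⁺(qξt)). -/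

import Mathlib

noncomputable section

/-- The commutator `[X,Y] = XY - YX`. -/
def br {A : Type*} [Ring A] (X Y : A) : A := X * Y - Y * X

/-- The `q`-commutator `[X,Y]_q = q·XY - q⁻¹·YX`. -/
def qbr {F : Type*} [Field F] (q : F) {A : Type*} [Ring A] [Algebra F A] (X Y : A) : A :=
  q • (X * Y) - q⁻¹ • (Y * X)

/-- The element `E_δ = q⁻² W₁ W₀ - W₀ W₁`. -/
def Edel {F : Type*} [Field F] (q : F) {A : Type*} [Ring A] [Algebra F A] (W0 W1 : A) : A :=
  (q ^ 2)⁻¹ • (W1 * W0) - W0 * W1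

/-- The elements `E_{nδ+α₀}`. -/
def Em {F : Type*} [Field F] (q : F) {A : Type*} [Ring A] [Algebra F A] (W0 W1 : A) : ℕ → A
  | 0 => W0
  | n + 1 => (q + q⁻¹)⁻¹ • br (Edel q W0 W1) (Em q W0 W1 n)

/-- The elements `E_{nδ+α₁}`. -/
def Ep {F : Type*} [Field F] (q : F) {A : Type*} [Ring A] [Algebra F A] (W0 W1 : A) : ℕ → A
  | 0 => W1
  | n + 1 => (q + q⁻¹)⁻¹ • br (Ep q W0 W1 n) (Edel q W0 W1)

/-- The elements `E_{nδ}` (with `E_{0δ} = -(q-q⁻¹)⁻¹`). -/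
def Ed {F : Type*} [Field F] (q : F) {A : Type*} [Ring A] [Algebra F A] (W0 W1 : A) : ℕ → A
  | 0 => (-(q - q⁻¹)⁻¹) • (1 : A)
  | n + 1 => (q ^ 2)⁻¹ • (Ep q W0 W1 n * W0) - W0 * Ep q W0 W1 n

/-- The generating function with coefficients `a n`. -/
def ser {A : Type*} [Ring A] (a : ℕ → A) : PowerSeries A := PowerSeries.mk a

/-- The rescaled generating function `a(ct)`. -/
def serc {F : Type*} [Field F] {A : Type*} [Ring A] [Algebra F A] (c : F) (a : ℕ → A) :
    PowerSeries A := PowerSeries.mk fun n => c ^ n • a n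

/-- The generating function `a(s)` in the first variable `s`. -/
def serS {A : Type*} [Ring A] (a : ℕ → A) : PowerSeries (PowerSeries A) :=
  (PowerSeries.C : PowerSeries A →+* PowerSeries (PowerSeries A)) (PowerSeries.mk a)

/-- The generating function `a(t)` in the second variable `t`. -/
def serT {A : Type*} [Ring A] (a : ℕ → A) : PowerSeries (PowerSeries A) :=
  PowerSeries.mk fun n => (PowerSeries.C : A →+* PowerSeries A) (a n)

/-- The rescaled generating function `a(ct)` in the second variable `t`. -/
def serTc {F : Type*} [Field F] {A : Type*} [Ring A] [Algebra F A] (c : F) (a : ℕ → A) :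
    PowerSeries (PowerSeries A) := PowerSeries.mk fun n => (PowerSeries.C : A →+* PowerSeries A) (c ^ n • a n)

/-- The variable `s` viewed in the two-variable power series ring. -/
def sVar (A : Type*) [Ring A] : PowerSeries (PowerSeries A) :=
  (PowerSeries.C : PowerSeries A →+* PowerSeries (PowerSeries A)) PowerSeries.X

/-- The variable `t` viewed in the two-variable power series ring. -/
def tVar (A : Type*) [Ring A] : PowerSeries (PowerSeries A) := PowerSeries.X

/-- Elements of an `F`-algebra satisfying the defining relations of the alternating
central extension `𝒰_q^+`.  Here `Wm k = 𝒲_{-k}`, `Wp k = 𝒲_{k+1}`, `G k = 𝒢_k`,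
`Gt k = 𝒢̃_k` (with `𝒢₀ = 𝒢̃₀ = 1`). -/
structure AltData (F : Type*) [Field F] (q : F) (A : Type*) [Ring A] [Algebra F A] where
  Wm : ℕ → A
  Wp : ℕ → A
  G : ℕ → A
  Gt : ℕ → A
  hG0 : G 0 = 1
  hGt0 : Gt 0 = 1
  rel1 : ∀ k : ℕ, br (Wm 0) (Wp k) = (1 - (q ^ 2)⁻¹) • (Gt (k + 1) - G (k + 1))
  rel2 : ∀ k : ℕ, br (Wm k) (Wp 0) = (1 - (q ^ 2)⁻¹) • (Gt (k + 1) - G (k + 1))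
  rel3 : ∀ k : ℕ, qbr q (Wm 0) (G (k + 1)) = (q - q⁻¹) • Wm (k + 1)
  rel4 : ∀ k : ℕ, qbr q (Gt (k + 1)) (Wm 0) = (q - q⁻¹) • Wm (k + 1)
  rel5 : ∀ k : ℕ, qbr q (G (k + 1)) (Wp 0) = (q - q⁻¹) • Wp (k + 1)
  rel6 : ∀ k : ℕ, qbr q (Wp 0) (Gt (k + 1)) = (q - q⁻¹) • Wp (k + 1)
  rel7 : ∀ k l : ℕ, br (Wm k) (Wm l) = 0
  rel8 : ∀ k l : ℕ, br (Wp k) (Wp l) = 0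
  rel9 : ∀ k l : ℕ, br (Wm k) (Wp l) + br (Wp k) (Wm l) = 0
  rel10 : ∀ k l : ℕ, br (Wm k) (G (l + 1)) + br (G (k + 1)) (Wm l) = 0
  rel11 : ∀ k l : ℕ, br (Wm k) (Gt (l + 1)) + br (Gt (k + 1)) (Wm l) = 0
  rel12 : ∀ k l : ℕ, br (Wp k) (G (l + 1)) + br (G (k + 1)) (Wp l) = 0
  rel13 : ∀ k l : ℕ, br (Wp k) (Gt (l + 1)) + br (Gt (k + 1)) (Wp l) = 0
  rel14 : ∀ k l : ℕ, br (G (k + 1)) (G (l + 1)) = 0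
  rel15 : ∀ k l : ℕ, br (Gt (k + 1)) (Gt (l + 1)) = 0
  rel16 : ∀ k l : ℕ, br (Gt (k + 1)) (G (l + 1)) + br (G (k + 1)) (Gt (l + 1)) = 0

/-- The scalar `ξ = -q²(q-q⁻¹)⁻²`. -/
def xi {F : Type*} [Field F] (q : F) : F := -(q ^ 2) * ((q - q⁻¹)⁻¹) ^ 2

/-- The central elements `𝒵ⁿ∨` (with `𝒵₀∨ = 1`). -/
def Zv {F : Type*} [Field F] (q : F) {A : Type*} [Ring A] [Algebra F A]
    (D : AltData F q A) (n : ℕ) : A :=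
  (∑ k ∈ Finset.range (n + 1), (q ^ ((n : ℤ) - 2 * (k : ℤ))) • (D.G k * D.Gt (n - k))) -
    q • ∑ k ∈ Finset.range n, (q ^ ((n : ℤ) - 1 - 2 * (k : ℤ))) • (D.Wm k * D.Wp (n - 1 - k))


section Stmt11Aux

variable {F : Type*} [Field F] {q : F} {A : Type*} [Ring A] [Algebra F A]

private lemma solve1 (hq0 : q ≠ 0) {x y z : A} (h : q • y - q⁻¹ • x = z) :
    x = (q ^ 2) • y - q • z := by
  have hx : x = q • (q⁻¹ • x) := by rw [smul_smul, mul_inv_cancel₀ hq0, one_smul]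
  have h2 : q⁻¹ • x = q • y - z := by rw [← h]; abel
  rw [hx, h2, smul_sub, smul_smul, ← pow_two]

private lemma solve2 (hq0 : q ≠ 0) {x y z : A} (h : q • x - q⁻¹ • y = z) :
    x = (q ^ 2)⁻¹ • y + q⁻¹ • z := by
  have hx : x = q⁻¹ • (q • x) := by rw [smul_smul, inv_mul_cancel₀ hq0, one_smul]
  have h2 : q • x = q⁻¹ • y + z := by rw [← h]; abel
  rw [hx, h2, smul_add, smul_smul, ← mul_inv, ← pow_two]

private lemma aGt (D : AltData F q A) (hq0 : q ≠ 0) :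
    ∀ m : ℕ, D.Wm 0 * D.Gt m = (q ^ 2) • (D.Gt m * D.Wm 0) - (q * (q - q⁻¹)) • D.Wm m
  | 0 => by
    rw [D.hGt0, one_mul, mul_one, ← sub_smul]
    have h1 : q ^ 2 - q * (q - q⁻¹) = 1 := by field_simp; ring
    rw [h1, one_smul]
  | k + 1 => by
    have h := D.rel4 k
    unfold qbr at h
    rw [solve1 hq0 h, smul_smul]

private lemma aG (D : AltData F q A) (hq0 : q ≠ 0) (k : ℕ) :
    D.Wm 0 * D.G (k + 1) =
      (q ^ 2)⁻¹ • (D.G (k + 1) * D.Wm 0) + (q⁻¹ * (q - q⁻¹)) • D.Wm (k + 1) := by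
  have h := D.rel3 k
  unfold qbr at h
  rw [solve2 hq0 h, smul_smul]

private lemma bGt (D : AltData F q A) (hq0 : q ≠ 0) :
    ∀ m : ℕ, D.Wp 0 * D.Gt m = (q ^ 2)⁻¹ • (D.Gt m * D.Wp 0) + (q⁻¹ * (q - q⁻¹)) • D.Wp m
  | 0 => by
    rw [D.hGt0, one_mul, mul_one, ← add_smul]
    have h1 : (q ^ 2)⁻¹ + q⁻¹ * (q - q⁻¹) = 1 := by
      field_simp
      ring
    rw [h1, one_smul]
  | k + 1 => by
    have h := D.rel6 k
    unfold qbr at h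
    rw [solve2 hq0 h, smul_smul]

private lemma bG (D : AltData F q A) (hq0 : q ≠ 0) (k : ℕ) :
    D.Wp 0 * D.G (k + 1) =
      (q ^ 2) • (D.G (k + 1) * D.Wp 0) - (q * (q - q⁻¹)) • D.Wp (k + 1) := by
  have h := D.rel5 k
  unfold qbr at h
  rw [solve1 hq0 h, smul_smul]

private lemma aWm (D : AltData F q A) (n : ℕ) : D.Wm 0 * D.Wm n = D.Wm n * D.Wm 0 := by
  have h := D.rel7 0 n
  unfold br at h
  exact sub_eq_zero.mp h

private lemma bWp (D : AltData F q A) (n : ℕ) : D.Wp 0 * D.Wp n = D.Wp n * D.Wp 0 := by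
  have h := D.rel8 0 n
  unfold br at h
  exact sub_eq_zero.mp h

private lemma bWm (D : AltData F q A) (n : ℕ) :
    D.Wp 0 * D.Wm n =
      D.Wm n * D.Wp 0 - (1 - (q ^ 2)⁻¹) • (D.Gt (n + 1) - D.G (n + 1)) := by
  have h := D.rel2 n
  unfold br at h
  linear_combination (norm := module) -h

private lemma aWp (D : AltData F q A) (n : ℕ) :
    D.Wm 0 * D.Wp n =
      D.Wp n * D.Wm 0 + (1 - (q ^ 2)⁻¹) • (D.Gt (n + 1) - D.G (n + 1)) := by
  have h := D.rel1 n
  unfold br at h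
  linear_combination (norm := module) h

/-- `E_δ` commutes with every `𝒢̃_m`. -/
private lemma EGt (D : AltData F q A) (hq0 : q ≠ 0) (m : ℕ) :
    Edel q (D.Wm 0) (D.Wp 0) * D.Gt m = D.Gt m * Edel q (D.Wm 0) (D.Wp 0) := by
  have H9 := D.rel9 m 0
  unfold br at H9
  have P1 : D.Wp 0 * (D.Gt m * D.Wm 0) =
      (q ^ 2)⁻¹ • (D.Gt m * (D.Wp 0 * D.Wm 0)) + (q⁻¹ * (q - q⁻¹)) • (D.Wp m * D.Wm 0) := by
    have h := congrArg (· * D.Wm 0) (bGt D hq0 m)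
    simp only [add_mul, smul_mul_assoc, mul_assoc] at h
    exact h
  have P2 : D.Wm 0 * (D.Gt m * D.Wp 0) =
      (q ^ 2) • (D.Gt m * (D.Wm 0 * D.Wp 0)) - (q * (q - q⁻¹)) • (D.Wm m * D.Wp 0) := by
    have h := congrArg (· * D.Wp 0) (aGt D hq0 m)
    simp only [sub_mul, smul_mul_assoc, mul_assoc] at h
    exact h
  unfold Edel
  simp only [sub_mul, mul_sub, smul_mul_assoc, mul_smul_comm, mul_assoc]
  rw [aGt D hq0 m]
  simp only [mul_sub, mul_smul_comm, smul_sub, smul_smul]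
  rw [P1]
  rw [bGt D hq0 m]
  simp only [mul_add, mul_smul_comm, smul_add, smul_smul]
  rw [P2]
  linear_combination (norm := match_scalars <;> (try field_simp) <;> (try ring) <;> (try field_simp) <;> try ring) (q⁻¹ * (q - q⁻¹)) • H9

/-- The bracket `[E_δ, 𝒲_{-n}]`. -/
private lemma EWm (D : AltData F q A) (hq0 : q ≠ 0) (n : ℕ) :
    Edel q (D.Wm 0) (D.Wp 0) * D.Wm n - D.Wm n * Edel q (D.Wm 0) (D.Wp 0) =
      ((1 - (q ^ 2)⁻¹) * (q ^ 2 - (q ^ 2)⁻¹)) • (D.Gt (n + 1) * D.Wm 0 - D.Wm (n + 1)) := by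
  have F1 : D.Wp 0 * (D.Wm n * D.Wm 0) =
      D.Wm n * (D.Wp 0 * D.Wm 0) -
        (1 - (q ^ 2)⁻¹) • (D.Gt (n + 1) * D.Wm 0) +
        (1 - (q ^ 2)⁻¹) • (D.G (n + 1) * D.Wm 0) := by
    have h := congrArg (· * D.Wm 0) (bWm D n)
    simp only [sub_mul, smul_mul_assoc, mul_assoc, smul_sub] at h
    linear_combination (norm := module) h
  have F3 : D.Wm 0 * (D.Wm n * D.Wp 0) = D.Wm n * (D.Wm 0 * D.Wp 0) := by
    have h := congrArg (· * D.Wp 0) (aWm D n)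
    simp only [mul_assoc] at h
    exact h
  unfold Edel
  simp only [sub_mul, mul_sub, smul_mul_assoc, mul_smul_comm, mul_assoc]
  rw [aWm D n, F1, bWm D n]
  simp only [mul_sub, mul_smul_comm, smul_sub, smul_smul]
  rw [F3, aGt D hq0 (n + 1), aG D hq0 n]
  match_scalars <;> (try field_simp) <;> (try ring) <;> (try field_simp) <;> try ring

/-- The bracket `[E_δ, 𝒲_{n+1}]`. -/
private lemma EWp (D : AltData F q A) (hq0 : q ≠ 0) (n : ℕ) :
    Edel q (D.Wm 0) (D.Wp 0) * D.Wp n - D.Wp n * Edel q (D.Wm 0) (D.Wp 0) =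
      ((1 - (q ^ 2)⁻¹) * (q ^ 2 - (q ^ 2)⁻¹)) •
        ((q ^ 2)⁻¹ • (D.Wp (n + 1) - D.Gt (n + 1) * D.Wp 0)) := by
  have G2 : D.Wp 0 * (D.Wp n * D.Wm 0) = D.Wp n * (D.Wp 0 * D.Wm 0) := by
    have h := congrArg (· * D.Wm 0) (bWp D n)
    simp only [mul_assoc] at h
    exact h
  have G3 : D.Wm 0 * (D.Wp n * D.Wp 0) =
      D.Wp n * (D.Wm 0 * D.Wp 0) +
        (1 - (q ^ 2)⁻¹) • (D.Gt (n + 1) * D.Wp 0) -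
        (1 - (q ^ 2)⁻¹) • (D.G (n + 1) * D.Wp 0) := by
    have h := congrArg (· * D.Wp 0) (aWp D n)
    simp only [add_mul, sub_mul, smul_mul_assoc, mul_assoc, smul_sub] at h
    linear_combination (norm := module) h
  unfold Edel
  simp only [sub_mul, mul_sub, smul_mul_assoc, mul_smul_comm, mul_assoc]
  rw [aWp D n]
  simp only [mul_add, mul_sub, mul_smul_comm, smul_add, smul_sub, smul_smul]
  rw [G2, bWp D n, G3, bGt D hq0 (n + 1), bG D hq0 n]
  match_scalars <;> (try field_simp) <;> (try ring) <;> (try field_simp) <;> try ring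

private lemma hqm (hq0 : q ≠ 0) (h2 : q ^ 2 ≠ 1) : q - q⁻¹ ≠ 0 := by
  intro h
  apply h2
  have h' : q = q⁻¹ := sub_eq_zero.mp h
  rw [pow_two]
  nth_rewrite 2 [h']
  exact mul_inv_cancel₀ hq0

private lemma hqp (hq0 : q ≠ 0) (h4 : q ^ 4 ≠ 1) : q + q⁻¹ ≠ 0 := by
  intro h
  apply h4
  have h1 : q ^ 2 = -1 := by
    have h' := congrArg (fun x => q * x) h
    simp only [mul_add, mul_zero, mul_inv_cancel₀ hq0] at h'
    rw [pow_two]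
    exact eq_neg_of_add_eq_zero_left h'
  calc q ^ 4 = (q ^ 2) ^ 2 := by ring
  _ = 1 := by rw [h1]; ring

private lemma Dne (hq0 : q ≠ 0) (n1 : q ^ 2 - 1 ≠ 0) (n2 : q ^ 2 + 1 ≠ 0) (a : ℕ) (x : F)
    (hx : x = q ^ a * ((q ^ 2 - 1) * ((q ^ 2 - 1) * (q ^ 2 + 1)))) : x ≠ 0 := by
  rw [hx]
  exact mul_ne_zero (pow_ne_zero _ hq0) (mul_ne_zero n1 (mul_ne_zero n1 n2))

private lemma T1 (D : AltData F q A) (hq0 : q ≠ 0) (hm : q - q⁻¹ ≠ 0) (hp : q + q⁻¹ ≠ 0) :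
    ∀ n : ℕ, ∑ k ∈ Finset.range (n + 1),
      (q * xi q) ^ k • (Em q (D.Wm 0) (D.Wp 0) k * D.Gt (n - k)) = D.Wm n := by
  have e1 : q - q⁻¹ = (q ^ 2 - 1) / q := by field_simp
  have e2 : q + q⁻¹ = (q ^ 2 + 1) / q := by field_simp
  have n1 : q ^ 2 - 1 ≠ 0 := by rw [e1] at hm; exact fun h => hm (by rw [h]; simp)
  have n2 : q ^ 2 + 1 ≠ 0 := by rw [e2] at hp; exact fun h => hp (by rw [h]; simp)
  intro n
  induction n with
  | zero => simp [Em, D.hGt0]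
  | succ n IH =>
    have key : ∀ i ∈ Finset.range (n + 1),
        (q * xi q) ^ (i + 1) • (Em q (D.Wm 0) (D.Wp 0) (i + 1) * D.Gt (n + 1 - (i + 1))) =
          ((q * xi q) * (q + q⁻¹)⁻¹) •
            (Edel q (D.Wm 0) (D.Wp 0) *
                ((q * xi q) ^ i • (Em q (D.Wm 0) (D.Wp 0) i * D.Gt (n - i))) -
              ((q * xi q) ^ i • (Em q (D.Wm 0) (D.Wp 0) i * D.Gt (n - i))) *
                Edel q (D.Wm 0) (D.Wp 0)) := by
      intro i _
      simp only [Em, br, Nat.succ_sub_succ, smul_mul_assoc, sub_mul, mul_smul_comm, smul_sub,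
        smul_smul, mul_assoc]
      rw [EGt D hq0 (n - i)]
      match_scalars <;> ring
    rw [Finset.sum_range_succ', Finset.sum_congr rfl key, ← Finset.smul_sum,
      Finset.sum_sub_distrib, ← Finset.mul_sum, ← Finset.sum_mul, IH, EWm D hq0 n]
    simp only [Em, pow_zero, one_smul, Nat.sub_zero]
    rw [aGt D hq0 (n + 1)]
    match_scalars <;> (try simp only [xi, e1, e2]) <;> (try field_simp) <;> (try ring) <;> (try field_simp) <;> try ring


private lemma T2 (D : AltData F q A) (hq0 : q ≠ 0) (hm : q - q⁻¹ ≠ 0) (hp : q + q⁻¹ ≠ 0) :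
    ∀ n : ℕ, ∑ k ∈ Finset.range (n + 1),
      (q⁻¹ * xi q) ^ k • (Ep q (D.Wm 0) (D.Wp 0) k * D.Gt (n - k)) = D.Wp n := by
  have e1 : q - q⁻¹ = (q ^ 2 - 1) / q := by field_simp
  have e2 : q + q⁻¹ = (q ^ 2 + 1) / q := by field_simp
  have n1 : q ^ 2 - 1 ≠ 0 := by rw [e1] at hm; exact fun h => hm (by rw [h]; simp)
  have n2 : q ^ 2 + 1 ≠ 0 := by rw [e2] at hp; exact fun h => hp (by rw [h]; simp)
  have hD : q ^ 7 + (-q ^ 9 - q ^ 11) + q ^ 13 ≠ 0 := Dne hq0 n1 n2 7 _ (by ring)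
  intro n
  induction n with
  | zero => simp [Ep, D.hGt0]
  | succ n IH =>
    have key : ∀ i ∈ Finset.range (n + 1),
        (q⁻¹ * xi q) ^ (i + 1) • (Ep q (D.Wm 0) (D.Wp 0) (i + 1) * D.Gt (n + 1 - (i + 1))) =
          (-(q⁻¹ * xi q) * (q + q⁻¹)⁻¹) •
            (Edel q (D.Wm 0) (D.Wp 0) *
                ((q⁻¹ * xi q) ^ i • (Ep q (D.Wm 0) (D.Wp 0) i * D.Gt (n - i))) -
              ((q⁻¹ * xi q) ^ i • (Ep q (D.Wm 0) (D.Wp 0) i * D.Gt (n - i))) *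
                Edel q (D.Wm 0) (D.Wp 0)) := by
      intro i _
      simp only [Ep, br, Nat.succ_sub_succ, smul_mul_assoc, sub_mul, mul_smul_comm, smul_sub,
        smul_smul, mul_assoc]
      rw [EGt D hq0 (n - i)]
      match_scalars <;> ring
    rw [Finset.sum_range_succ', Finset.sum_congr rfl key, ← Finset.smul_sum,
      Finset.sum_sub_distrib, ← Finset.mul_sum, ← Finset.sum_mul, IH, EWp D hq0 n]
    simp only [Ep, pow_zero, one_smul, Nat.sub_zero]
    rw [bGt D hq0 (n + 1)]
    match_scalars <;> (try simp only [xi, e1, e2]) <;> (try field_simp) <;> (try ring) <;> (try field_simp) <;> try ring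

private lemma T3 (D : AltData F q A) (hq0 : q ≠ 0) (hm : q - q⁻¹ ≠ 0) (hp : q + q⁻¹ ≠ 0) :
    ∀ n : ℕ, ∑ k ∈ Finset.range (n + 1),
      (q⁻¹ * xi q) ^ k • (D.Gt (n - k) * Em q (D.Wm 0) (D.Wp 0) k) = D.Wm n := by
  have e1 : q - q⁻¹ = (q ^ 2 - 1) / q := by field_simp
  have e2 : q + q⁻¹ = (q ^ 2 + 1) / q := by field_simp
  have n1 : q ^ 2 - 1 ≠ 0 := by rw [e1] at hm; exact fun h => hm (by rw [h]; simp)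
  have n2 : q ^ 2 + 1 ≠ 0 := by rw [e2] at hp; exact fun h => hp (by rw [h]; simp)
  have hD : q ^ 5 + (-q ^ 7 - q ^ 9) + q ^ 11 ≠ 0 := Dne hq0 n1 n2 5 _ (by ring)
  intro n
  induction n with
  | zero => simp [Em, D.hGt0]
  | succ n IH =>
    have key : ∀ i ∈ Finset.range (n + 1),
        (q⁻¹ * xi q) ^ (i + 1) • (D.Gt (n + 1 - (i + 1)) * Em q (D.Wm 0) (D.Wp 0) (i + 1)) =
          ((q⁻¹ * xi q) * (q + q⁻¹)⁻¹) •
            (Edel q (D.Wm 0) (D.Wp 0) *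
                ((q⁻¹ * xi q) ^ i • (D.Gt (n - i) * Em q (D.Wm 0) (D.Wp 0) i)) -
              ((q⁻¹ * xi q) ^ i • (D.Gt (n - i) * Em q (D.Wm 0) (D.Wp 0) i)) *
                Edel q (D.Wm 0) (D.Wp 0)) := by
      intro i _
      simp only [Em, br, Nat.succ_sub_succ, mul_sub, sub_mul, mul_smul_comm, smul_mul_assoc,
        smul_sub, smul_smul, ← mul_assoc]
      rw [← EGt D hq0 (n - i)]
      match_scalars <;> ring
    rw [Finset.sum_range_succ', Finset.sum_congr rfl key, ← Finset.smul_sum,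
      Finset.sum_sub_distrib, ← Finset.mul_sum, ← Finset.sum_mul, IH, EWm D hq0 n]
    simp only [Em, pow_zero, one_smul, Nat.sub_zero]
    match_scalars <;> (try simp only [xi, e1, e2]) <;> (try field_simp) <;> (try ring) <;> (try field_simp) <;> try ring

private lemma T4 (D : AltData F q A) (hq0 : q ≠ 0) (hm : q - q⁻¹ ≠ 0) (hp : q + q⁻¹ ≠ 0) :
    ∀ n : ℕ, ∑ k ∈ Finset.range (n + 1),
      (q * xi q) ^ k • (D.Gt (n - k) * Ep q (D.Wm 0) (D.Wp 0) k) = D.Wp n := by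
  have e1 : q - q⁻¹ = (q ^ 2 - 1) / q := by field_simp
  have e2 : q + q⁻¹ = (q ^ 2 + 1) / q := by field_simp
  have n1 : q ^ 2 - 1 ≠ 0 := by rw [e1] at hm; exact fun h => hm (by rw [h]; simp)
  have n2 : q ^ 2 + 1 ≠ 0 := by rw [e2] at hp; exact fun h => hp (by rw [h]; simp)
  have hD : q ^ 6 + (-q ^ 8 - q ^ 10) + q ^ 12 ≠ 0 := Dne hq0 n1 n2 6 _ (by ring)
  intro n
  induction n with
  | zero => simp [Ep, D.hGt0]
  | succ n IH =>
    have key : ∀ i ∈ Finset.range (n + 1),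
        (q * xi q) ^ (i + 1) • (D.Gt (n + 1 - (i + 1)) * Ep q (D.Wm 0) (D.Wp 0) (i + 1)) =
          (-(q * xi q) * (q + q⁻¹)⁻¹) •
            (Edel q (D.Wm 0) (D.Wp 0) *
                ((q * xi q) ^ i • (D.Gt (n - i) * Ep q (D.Wm 0) (D.Wp 0) i)) -
              ((q * xi q) ^ i • (D.Gt (n - i) * Ep q (D.Wm 0) (D.Wp 0) i)) *
                Edel q (D.Wm 0) (D.Wp 0)) := by
      intro i _
      simp only [Ep, br, Nat.succ_sub_succ, mul_sub, sub_mul, mul_smul_comm, smul_mul_assoc,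
        smul_sub, smul_smul, ← mul_assoc]
      rw [← EGt D hq0 (n - i)]
      match_scalars <;> ring
    rw [Finset.sum_range_succ', Finset.sum_congr rfl key, ← Finset.smul_sum,
      Finset.sum_sub_distrib, ← Finset.mul_sum, ← Finset.sum_mul, IH, EWp D hq0 n]
    simp only [Ep, pow_zero, one_smul, Nat.sub_zero]
    match_scalars <;> (try simp only [xi, e1, e2]) <;> (try field_simp) <;> (try ring) <;> (try field_simp) <;> try ring

end Stmt11Aux

/-- four identities relating `𝒢̃(t)` with `𝒲₀`, `𝒲₁` and the rescaled
series `E⁻`, `E⁺`, in the power series ring in `t` over `𝒰_q^+`. -/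
theorem stmt11 {F : Type*} [Field F] (q : F) (hq0 : q ≠ 0)
    (hq : ∀ n : ℕ, 0 < n → q ^ n ≠ 1)
    {A : Type*} [Ring A] [Algebra F A] (D : AltData F q A) :
    ser D.Gt * (PowerSeries.C : A →+* PowerSeries A) (D.Wm 0) =
        ((q ^ 2)⁻¹ • (PowerSeries.C : A →+* PowerSeries A) (D.Wm 0) +
          (q⁻¹ * (q - q⁻¹)) • serc (q * xi q) (Em q (D.Wm 0) (D.Wp 0))) * ser D.Gt ∧
    ser D.Gt * (PowerSeries.C : A →+* PowerSeries A) (D.Wp 0) =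
        (q ^ 2 • (PowerSeries.C : A →+* PowerSeries A) (D.Wp 0) -
          (q * (q - q⁻¹)) • serc (q⁻¹ * xi q) (Ep q (D.Wm 0) (D.Wp 0))) * ser D.Gt ∧
    (PowerSeries.C : A →+* PowerSeries A) (D.Wm 0) * ser D.Gt =
        ser D.Gt * (q ^ 2 • (PowerSeries.C : A →+* PowerSeries A) (D.Wm 0) -
          (q * (q - q⁻¹)) • serc (q⁻¹ * xi q) (Em q (D.Wm 0) (D.Wp 0))) ∧
    (PowerSeries.C : A →+* PowerSeries A) (D.Wp 0) * ser D.Gt =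
        ser D.Gt * ((q ^ 2)⁻¹ • (PowerSeries.C : A →+* PowerSeries A) (D.Wp 0) +
          (q⁻¹ * (q - q⁻¹)) • serc (q * xi q) (Ep q (D.Wm 0) (D.Wp 0))) := by
  have h2 : q ^ 2 ≠ 1 := hq 2 (by norm_num)
  have h4 : q ^ 4 ≠ 1 := hq 4 (by norm_num)
  have hm : q - q⁻¹ ≠ 0 := hqm hq0 h2
  have hp : q + q⁻¹ ≠ 0 := hqp hq0 h4
  refine ⟨?_, ?_, ?_, ?_⟩
  · apply PowerSeries.ext
    intro n
    simp only [ser, serc, add_mul, smul_mul_assoc, map_add, PowerSeries.coeff_smul,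
      PowerSeries.coeff_mul_C, PowerSeries.coeff_C_mul, PowerSeries.coeff_mk]
    rw [PowerSeries.coeff_mul, Finset.Nat.sum_antidiagonal_eq_sum_range_succ_mk]
    simp only [PowerSeries.coeff_mk, smul_mul_assoc]
    rw [T1 D hq0 hm hp n, aGt D hq0 n]
    try (match_scalars <;> (try field_simp) <;> (try ring) <;> (try field_simp) <;> try ring)
  · apply PowerSeries.ext
    intro n
    simp only [ser, serc, sub_mul, smul_mul_assoc, map_sub, PowerSeries.coeff_smul,
      PowerSeries.coeff_mul_C, PowerSeries.coeff_C_mul, PowerSeries.coeff_mk]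
    rw [PowerSeries.coeff_mul, Finset.Nat.sum_antidiagonal_eq_sum_range_succ_mk]
    simp only [PowerSeries.coeff_mk, smul_mul_assoc]
    rw [T2 D hq0 hm hp n, bGt D hq0 n]
    try (match_scalars <;> (try field_simp) <;> (try ring) <;> (try field_simp) <;> try ring)
  · apply PowerSeries.ext
    intro n
    simp only [ser, serc, mul_sub, mul_smul_comm, map_sub, PowerSeries.coeff_smul,
      PowerSeries.coeff_mul_C, PowerSeries.coeff_C_mul, PowerSeries.coeff_mk]
    rw [PowerSeries.coeff_mul, ← Finset.Nat.sum_antidiagonal_swap,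
      Finset.Nat.sum_antidiagonal_eq_sum_range_succ_mk]
    simp only [Prod.fst_swap, Prod.snd_swap, PowerSeries.coeff_mk, mul_smul_comm]
    rw [T3 D hq0 hm hp n, aGt D hq0 n]
    try (match_scalars <;> (try field_simp) <;> (try ring) <;> (try field_simp) <;> try ring)
  · apply PowerSeries.ext
    intro n
    simp only [ser, serc, mul_add, mul_smul_comm, map_add, PowerSeries.coeff_smul,
      PowerSeries.coeff_mul_C, PowerSeries.coeff_C_mul, PowerSeries.coeff_mk]
    rw [PowerSeries.coeff_mul, ← Finset.Nat.sum_antidiagonal_swap,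
      Finset.Nat.sum_antidiagonal_eq_sum_range_succ_mk]
    simp only [Prod.fst_swap, Prod.snd_swap, PowerSeries.coeff_mk, mul_smul_comm]
    rw [T4 D hq0 hm hp n, bGt D hq0 n]
    try (match_scalars <;> (try field_simp) <;> (try ring) <;> (try field_simp) <;> try ring)
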